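/- Let G be a multigraph realizing degree sequence d with m_d light double-edges and no other non-simple edges. Then the number of simple ordered two-stars in G is at least M_2 - 8·m_d·d_1. -/

import Mathlib

open Finset

/-- A multigraph on `n` nodes, given by a symmetric multiplicity function.
`mult i i` is the multiplicity of the loop at `i`. -/
structure Multigraph (n : ℕ) where
  mult : Fin n → Fin n → ℕ
  symm : ∀ i j, mult i j = mult j i

namespace Multigraph

/-- The degree of a node: a loop counts twice. -/
def deg {n : ℕ} (G : Multigraph n) (i : Fin n) : ℕ :=
  2 * G.mult i i + ∑ j ∈ Finset.univ.filter (fun j => j ≠ i), G.mult i j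

/-- `i j` is a simple edge: non-loop of multiplicity exactly 1. -/
def Simple {n : ℕ} (G : Multigraph n) (i j : Fin n) : Prop :=
  i ≠ j ∧ G.mult i j = 1

instance {n : ℕ} (G : Multigraph n) (i j : Fin n) : Decidable (G.Simple i j) :=
  inferInstanceAs (Decidable (i ≠ j ∧ G.mult i j = 1))

end Multigraph

/-- The (0-indexed) degree sequence extended to all of `ℕ` by zero. -/
def dExt (n : ℕ) (d : Fin n → ℕ) (i : ℕ) : ℕ :=
  if h : i < n then d ⟨i, h⟩ else 0

lemma descFac2 (m : ℕ) : (Nat.descFactorial m 2 : ℤ) = (m:ℤ)^2 - m := by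
  cases m with
  | zero => simp
  | succ k => simp [Nat.descFactorial]; ring

/-- lower bound on the number of simple ordered two-stars when the only
non-simple edges are `md` light double-edges. -/
theorem stmt3 (n h md : ℕ) (G : Multigraph n) (d : Fin n → ℕ)
    (hdeg : ∀ i, G.deg i = d i)
    (hsorted : ∀ i j : Fin n, i ≤ j → d j ≤ d i)
    (hh1 : 1 ≤ h) (hhn : h ≤ n)
    -- `md` light double-edges (counted as ordered pairs of endpoints)
    (hdouble : (Finset.univ.filter (fun p : Fin n × Fin n =>
        p.1 ≠ p.2 ∧ G.mult p.1 p.2 = 2 ∧ (h ≤ p.1.val ∨ h ≤ p.2.val))).card = 2 * md)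
    -- no other non-simple edges
    (hnoloop : ∀ i : Fin n, G.mult i i = 0)
    (hmax : ∀ i j : Fin n, i ≠ j → G.mult i j ≤ 2)
    (hmultilight : ∀ i j : Fin n, i ≠ j → 2 ≤ G.mult i j → (h ≤ i.val ∨ h ≤ j.val)) :
    ((∑ i : Fin n, Nat.descFactorial (d i) 2 : ℕ) : ℤ)
      - 8 * (md : ℤ) * (dExt n d 0 : ℤ)
    ≤ ((Finset.univ.filter (fun t : Fin n × Fin n × Fin n =>
        G.Simple t.1 t.2.1 ∧ G.Simple t.1 t.2.2 ∧ t.2.1 ≠ t.2.2)).card : ℤ) := by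
  classical
  have hn : 0 < n := lt_of_lt_of_le hh1 hhn
  set z : Fin n := ⟨0, hn⟩ with hz
  have hd0 : dExt n d 0 = d z := by simp [dExt, hn]; rfl
  set S : Fin n → ℕ := fun i => (univ.filter (fun j => G.Simple i j)).card with hSdef
  set T : Fin n → ℕ := fun i => (univ.filter (fun j => j ≠ i ∧ G.mult i j = 2)).card with hTdef
  -- RHS count
  have hRHS : ((Finset.univ.filter (fun t : Fin n × Fin n × Fin n =>
        G.Simple t.1 t.2.1 ∧ G.Simple t.1 t.2.2 ∧ t.2.1 ≠ t.2.2)).card : ℤ)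
      = ∑ i : Fin n, ((S i : ℤ)^2 - S i) := by
    rw [Finset.card_filter]
    push_cast
    rw [Fintype.sum_prod_type]
    refine Finset.sum_congr rfl fun i _ => ?_
    rw [Fintype.sum_prod_type]
    have hg : ∀ j k : Fin n, (if G.Simple i j ∧ G.Simple i k ∧ j ≠ k then (1:ℤ) else 0)
        = (if G.Simple i j then (1:ℤ) else 0) * (if G.Simple i k then 1 else 0)
          - (if j = k then (if G.Simple i j then (1:ℤ) else 0) else 0) := by
      intro j k
      by_cases h1 : G.Simple i j <;> by_cases h2 : G.Simple i k <;> by_cases h3 : j = k <;>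
        simp_all
    have hS' : (S i : ℤ) = ∑ j : Fin n, (if G.Simple i j then (1:ℤ) else 0) := by
      simp only [hSdef, Finset.card_filter]; push_cast; rfl
    simp only [hg, Finset.sum_sub_distrib, ← Finset.mul_sum, ← Finset.sum_mul,
      Finset.sum_ite_eq, Finset.mem_univ, if_true]
    rw [← hS']
    ring
  -- degree split
  have hdS : ∀ i, d i = S i + 2 * T i := by
    intro i
    rw [← hdeg i]
    unfold Multigraph.deg
    rw [hnoloop i]
    have h1 : ∀ j ∈ univ.filter (fun j => j ≠ i), G.mult i j
        = (if G.Simple i j then 1 else 0) + 2 * (if j ≠ i ∧ G.mult i j = 2 then 1 else 0) := by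
      intro j hj
      simp only [Finset.mem_filter, Finset.mem_univ, true_and] at hj
      have h2 := hmax i j (Ne.symm hj)
      simp only [Multigraph.Simple, Ne.symm hj, hj, ne_eq, not_false_iff, true_and, not_true]
      set m := G.mult i j with hm
      interval_cases m <;> norm_num
    rw [Finset.sum_congr rfl h1, Finset.sum_add_distrib, ← Finset.mul_sum]
    have hS2 : S i = ∑ j ∈ univ.filter (fun j => j ≠ i), (if G.Simple i j then 1 else 0) := by
      simp only [hSdef, Finset.card_filter, Finset.sum_filter]
      refine Finset.sum_congr rfl fun j _ => ?_
      by_cases hji : j = i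
      · subst hji; simp [Multigraph.Simple]
      · simp [hji]
    have hT2 : T i = ∑ j ∈ univ.filter (fun j => j ≠ i), (if j ≠ i ∧ G.mult i j = 2 then 1 else 0) := by
      simp only [hTdef, Finset.card_filter, Finset.sum_filter]
      refine Finset.sum_congr rfl fun j _ => ?_
      by_cases hji : j = i <;> simp [hji]
    rw [← hS2, ← hT2]
    omega
  -- sum of T
  have hTsum : ∑ i, T i = 2 * md := by
    rw [← hdouble, Finset.card_filter, Fintype.sum_prod_type]
    refine Finset.sum_congr rfl fun i _ => ?_
    simp only [hTdef, Finset.card_filter]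
    refine Finset.sum_congr rfl fun j _ => ?_
    by_cases hij : i = j
    · subst hij; simp [hnoloop]
    · by_cases hm : G.mult i j = 2
      · simp [hij, Ne.symm hij, hm, hmultilight i j hij (by omega)]
      · simp [hij, Ne.symm hij, hm]
  -- pointwise bound
  have key : ∀ i : Fin n, ((Nat.descFactorial (d i) 2 : ℤ)) - ((S i:ℤ)^2 - S i)
      ≤ 4 * T i * d z := by
    intro i
    rw [descFac2]
    have h1 : (d i:ℤ) = S i + 2 * T i := by exact_mod_cast congrArg (Nat.cast (R := ℤ)) (hdS i)
    have h2 : (d i:ℤ) ≤ d z := by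
      exact_mod_cast hsorted z i (by simp [hz, Fin.le_def])
    have h3 : (0:ℤ) ≤ T i := Nat.cast_nonneg _
    nlinarith [mul_nonneg h3 (sub_nonneg.mpr h2), sq_nonneg ((T i:ℤ))]
  have hsum := Finset.sum_le_sum (s := (univ : Finset (Fin n))) (fun i _ => key i)
  rw [Finset.sum_sub_distrib] at hsum
  have hT4 : ∑ i : Fin n, (4:ℤ) * T i * d z = 8 * md * d z := by
    simp only [mul_assoc, ← Finset.mul_sum, ← Finset.sum_mul]
    have : ((∑ i, (T i:ℤ))) = 2 * md := by exact_mod_cast hTsum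
    rw [this]; ring
  rw [hRHS, hd0]
  push_cast
  push_cast at hsum
  linarith [hsum, hT4.le, hT4.ge]
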